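/- Let T be a symmetric operator (not necessarily densely defined) with T² ⊆ T. Then T is an everywhere-defined orthogonal projection if and only if Tⁿ is self-adjoint for some n ≥ 2. -/

import Mathlib

open LinearPMap

set_option linter.unusedSectionVars false

noncomputable section

section BanachDefs

variable {H : Type*} [NormedAddCommGroup H] [NormedSpace ℂ H]

/-- Composition `g ∘ f` of unbounded operators, with the natural (maximal) domain
`{x ∈ dom f : f x ∈ dom g}`. -/
def LinearPMap.pComp (g f : H →ₗ.[ℂ] H) : H →ₗ.[ℂ] H where
  domain := (g.domain.comap f.toFun).map f.domain.subtype
  toFun := g.toFun ∘ₗ (f.toFun.restrict (p := g.domain.comap f.toFun) (q := g.domain)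
      (fun _ hx => hx)) ∘ₗ
    ((Submodule.equivMapOfInjective f.domain.subtype (Submodule.injective_subtype _)
      (g.domain.comap f.toFun)).symm).toLinearMap

/-- `n`-th power of an unbounded operator; `T^0` is the identity on all of `H`. -/
def LinearPMap.pPow (T : H →ₗ.[ℂ] H) : ℕ → (H →ₗ.[ℂ] H)
  | 0 => (LinearMap.id : H →ₗ[ℂ] H).toPMap ⊤
  | n + 1 => T.pComp (T.pPow n)

theorem LinearPMap.pPow_domain_succ_le (T : H →ₗ.[ℂ] H) (n : ℕ) :
    (T.pPow (n + 1)).domain ≤ (T.pPow n).domain := by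
  intro x hx
  simp_rw [pPow, pComp] at hx
  obtain ⟨y, -, rfl⟩ := hx
  exact y.2

theorem LinearPMap.pPow_domain_le (T : H →ₗ.[ℂ] H) {i n : ℕ} (h : i ≤ n) :
    (T.pPow n).domain ≤ (T.pPow i).domain := by
  induction n with
  | zero => exact Nat.le_zero.mp h ▸ le_rfl
  | succ n ih =>
    rcases Nat.lt_succ_iff_lt_or_eq.mp (Nat.lt_succ_of_le h) with h' | rfl
    · exact le_trans (T.pPow_domain_succ_le n) (ih (Nat.lt_succ_iff.mp h'))
    · exact le_rfl

/-- `p(T)` for a complex polynomial `p`, defined on `D(T^n)` where `n = deg p`. -/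
def LinearPMap.polyApp (p : Polynomial ℂ) (T : H →ₗ.[ℂ] H) : H →ₗ.[ℂ] H where
  domain := (T.pPow p.natDegree).domain
  toFun := ∑ i ∈ (Finset.range (p.natDegree + 1)).attach,
    p.coeff i.1 • ((T.pPow i.1).toFun ∘ₗ Submodule.inclusion
      (T.pPow_domain_le (Nat.lt_succ_iff.mp (Finset.mem_range.mp i.2))))

/-- `A - μ • I` with domain `dom A`. -/
def LinearPMap.subConst (A : H →ₗ.[ℂ] H) (μ : ℂ) : H →ₗ.[ℂ] H :=
  ⟨A.domain, A.toFun - μ • A.domain.subtype⟩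

/-- An unbounded operator is boundedly invertible if it is bijective from its domain onto `H`
with an everywhere-defined bounded (continuous) inverse. -/
def LinearPMap.IsBddInvertible (A : H →ₗ.[ℂ] H) : Prop :=
  ∃ B : H →L[ℂ] H, (∀ y : H, ∃ hy : B y ∈ A.domain, A ⟨B y, hy⟩ = y) ∧
    ∀ x : A.domain, B (A x) = (x : H)

/-- The spectrum of an unbounded operator: `μ ∉ σ(A)` iff `A - μI` is bijective with a
bounded everywhere-defined inverse. -/
def LinearPMap.pSpectrum (A : H →ₗ.[ℂ] H) : Set ℂ :=
  {μ | ¬ (A.subConst μ).IsBddInvertible}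

/-- The kernel of an unbounded operator, as a subset of `H`. -/
def LinearPMap.pKer (A : H →ₗ.[ℂ] H) : Set H :=
  {x | ∃ hx : x ∈ A.domain, A ⟨x, hx⟩ = 0}

/-- The range of an unbounded operator. -/
def LinearPMap.pRan (A : H →ₗ.[ℂ] H) : Set H :=
  Set.range fun x : A.domain => A x

/-- A bounded everywhere-defined operator seen as an unbounded operator. -/
def ContinuousLinearMap.toPMapTop (B : H →L[ℂ] H) : H →ₗ.[ℂ] H :=
  (B : H →ₗ[ℂ] H).toPMap ⊤

end BanachDefs

section HilbertDefs

variable {H : Type*} [NormedAddCommGroup H] [InnerProductSpace ℂ H] [CompleteSpace H]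

/-- A densely defined closed operator is quasinormal if `T T* T = T* T T`. -/
def LinearPMap.IsQuasinormal (T : H →ₗ.[ℂ] H) : Prop :=
  T.IsClosed ∧ Dense (T.domain : Set H) ∧
    T.pComp (T.adjoint.pComp T) = T.adjoint.pComp (T.pComp T)

/-- A densely defined closed operator is normal if `T* T = T T*` (an equality of unbounded
operators, domains included). -/
def LinearPMap.IsNormal (T : H →ₗ.[ℂ] H) : Prop :=
  T.IsClosed ∧ Dense (T.domain : Set H) ∧ T.adjoint.pComp T = T.pComp T.adjoint

/-- A symmetric (not necessarily densely defined) operator. -/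
def LinearPMap.IsSymm (T : H →ₗ.[ℂ] H) : Prop :=
  ∀ x y : T.domain, inner ℂ (T x) (y : H) = (inner ℂ (x : H) (T y) : ℂ)

/-- A paranormal operator: `‖Tx‖² ≤ ‖T²x‖ ‖x‖` for every `x ∈ D(T²)`. -/
def LinearPMap.IsParanormal (T : H →ₗ.[ℂ] H) : Prop :=
  ∀ (x : H) (hx : x ∈ T.domain) (hTx : T ⟨x, hx⟩ ∈ T.domain),
    ‖T ⟨x, hx⟩‖ ^ 2 ≤ ‖T ⟨T ⟨x, hx⟩, hTx⟩‖ * ‖x‖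

end HilbertDefs

end

section AuxBanach

namespace LinearPMap

variable {H : Type*} [NormedAddCommGroup H] [NormedSpace ℂ H]

theorem mem_pComp_domain {g f : H →ₗ.[ℂ] H} {x : H} :
    x ∈ (g.pComp f).domain ↔ ∃ hx : x ∈ f.domain, f ⟨x, hx⟩ ∈ g.domain := by
  show x ∈ (g.domain.comap f.toFun).map f.domain.subtype ↔ _
  rw [Submodule.mem_map]
  constructor
  · rintro ⟨y, hy, rfl⟩
    exact ⟨y.2, hy⟩
  · rintro ⟨hx, hfx⟩
    exact ⟨⟨x, hx⟩, hfx, rfl⟩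

theorem pComp_apply' {g f : H →ₗ.[ℂ] H} {x : H} (hX : x ∈ (g.pComp f).domain)
    (hx : x ∈ f.domain) (hfx : f ⟨x, hx⟩ ∈ g.domain) :
    (g.pComp f) ⟨x, hX⟩ = g ⟨f ⟨x, hx⟩, hfx⟩ := by
  set e := (Submodule.equivMapOfInjective f.domain.subtype (Submodule.injective_subtype _)
    (g.domain.comap f.toFun)).symm with he_def
  have he : ((e ⟨x, hX⟩ : f.domain) : H) = x :=
    Submodule.map_equivMapOfInjective_symm_apply _ _ _ ⟨x, hX⟩
  have h1 : (g.pComp f) ⟨x, hX⟩ = g.toFun ⟨f.toFun (e ⟨x, hX⟩ : f.domain), (e ⟨x, hX⟩).2⟩ := rfl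
  rw [h1]
  have h2 : (⟨f.toFun (e ⟨x, hX⟩ : f.domain), (e ⟨x, hX⟩).2⟩ : g.domain) = ⟨f ⟨x, hx⟩, hfx⟩ := by
    apply Subtype.ext
    show f.toFun (e ⟨x, hX⟩ : f.domain) = f ⟨x, hx⟩
    congr 1
    exact Subtype.ext he
  rw [h2]
  rfl

theorem pComp_le_pComp {g g' f f' : H →ₗ.[ℂ] H} (hg : g ≤ g') (hf : f ≤ f') :
    g.pComp f ≤ g'.pComp f' := by
  have key : ∀ x : H, x ∈ (g.pComp f).domain →
      ∃ (hx : x ∈ f.domain) (hx' : x ∈ f'.domain) (hfx : f ⟨x, hx⟩ ∈ g.domain)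
        (hfx' : f' ⟨x, hx'⟩ ∈ g'.domain), True := by
    intro x hX
    obtain ⟨hx, hfx⟩ := mem_pComp_domain.mp hX
    have hx' : x ∈ f'.domain := hf.1 hx
    have hval : f ⟨x, hx⟩ = f' ⟨x, hx'⟩ := hf.2 rfl
    exact ⟨hx, hx', hfx, by rw [← hval]; exact hg.1 hfx, trivial⟩
  have hdom : (g.pComp f).domain ≤ (g'.pComp f').domain := by
    intro x hX
    obtain ⟨hx, hx', hfx, hfx', -⟩ := key x hX
    exact mem_pComp_domain.mpr ⟨hx', hfx'⟩
  refine ⟨hdom, ?_⟩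
  rintro ⟨x, hX⟩ ⟨y, hY⟩ h
  have hxy : x = y := h
  subst hxy
  obtain ⟨hx, hx', hfx, hfx', -⟩ := key x hX
  rw [pComp_apply' hX hx hfx, pComp_apply' hY hx' hfx']
  exact hg.2 (hf.2 rfl)

theorem pPow_one (T : H →ₗ.[ℂ] H) : T.pPow 1 = T := by
  have hdom : (T.pPow 1).domain = T.domain := by
    ext x
    show x ∈ (T.pComp (T.pPow 0)).domain ↔ _
    rw [mem_pComp_domain]
    constructor
    · rintro ⟨hx, hTx⟩
      exact hTx
    · intro hx
      exact ⟨Submodule.mem_top, hx⟩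
  apply LinearPMap.ext hdom
  intro x hX hY
  have hx0 : x ∈ (T.pPow 0).domain := Submodule.mem_top
  have h0 : (T.pPow 0) ⟨x, hx0⟩ = x := rfl
  have hTx : (T.pPow 0) ⟨x, hx0⟩ ∈ T.domain := by rw [h0]; exact hY
  have hkey := pComp_apply' (g := T) (f := T.pPow 0) hX hx0 hTx
  refine hkey.trans ?_
  congr 1

theorem pPow_le_self {T : H →ₗ.[ℂ] H} (hsub : T.pComp T ≤ T) :
    ∀ n : ℕ, 1 ≤ n → T.pPow n ≤ T := by
  intro n hn
  induction n with
  | zero => omega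
  | succ m ih =>
    cases m with
    | zero => exact (pPow_one T).le
    | succ k =>
      calc T.pPow (k+1+1) = T.pComp (T.pPow (k+1)) := rfl
        _ ≤ T.pComp T := pComp_le_pComp le_rfl (ih (by omega))
        _ ≤ T := hsub

end LinearPMap

end AuxBanach
section AuxHilbert

namespace LinearPMap

variable {H : Type*} [NormedAddCommGroup H] [InnerProductSpace ℂ H] [CompleteSpace H]

theorem adjoint_antitone' {S T : H →ₗ.[ℂ] H} (hST : S ≤ T) (hS : Dense (S.domain : Set H))
    (hT : Dense (T.domain : Set H)) : T.adjoint ≤ S.adjoint := by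
  have hfa : T.adjoint.IsFormalAdjoint S := by
    intro x y
    obtain ⟨y', hy', heq⟩ := exists_of_le hST y
    rw [heq, hy']
    exact adjoint_isFormalAdjoint hT x y'
  exact hfa.symm.le_adjoint hS

end LinearPMap

end AuxHilbert
/-- a symmetric `T` with `T² ⊆ T` is an everywhere-defined orthogonal
projection iff `Tⁿ` is self-adjoint for some `n ≥ 2`. -/
theorem statement_14 {H : Type*} [NormedAddCommGroup H] [InnerProductSpace ℂ H] [CompleteSpace H]
    (T : H →ₗ.[ℂ] H) (hsymm : T.IsSymm) (hsub : T.pComp T ≤ T) :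
    (∃ P : H →L[ℂ] H, IsSelfAdjoint P ∧ IsIdempotentElem P ∧ T = P.toPMapTop) ↔
      ∃ n : ℕ, 2 ≤ n ∧ (T.pPow n).adjoint = T.pPow n := by
  have htop_dense : Dense ((⊤ : Submodule ℂ H) : Set H) := by
    rw [Submodule.top_coe]; exact dense_univ
  constructor
  · rintro ⟨P, hP, hidem, rfl⟩
    refine ⟨2, le_rfl, ?_⟩
    have h2 : (P.toPMapTop).pPow 2 = P.toPMapTop := by
      have h1 : (P.toPMapTop).pPow 1 = P.toPMapTop := LinearPMap.pPow_one _
      show (P.toPMapTop).pComp ((P.toPMapTop).pPow 1) = P.toPMapTop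
      rw [h1]
      have hdom : ((P.toPMapTop).pComp P.toPMapTop).domain = (P.toPMapTop).domain := by
        ext x
        rw [LinearPMap.mem_pComp_domain]
        constructor
        · rintro ⟨hx, -⟩; exact hx
        · intro hx; exact ⟨hx, Submodule.mem_top⟩
      apply LinearPMap.ext hdom
      intro x hX hY
      have hx : x ∈ (P.toPMapTop).domain := Submodule.mem_top
      have hPx : P.toPMapTop ⟨x, hx⟩ ∈ (P.toPMapTop).domain := Submodule.mem_top
      rw [LinearPMap.pComp_apply' hX hx hPx]
      show P (P x) = P x
      exact DFunLike.congr_fun hidem x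
    rw [h2]
    show ((P : H →ₗ[ℂ] H).toPMap ⊤).adjoint = _
    rw [ContinuousLinearMap.toPMap_adjoint_eq_adjoint_toPMap_of_dense P htop_dense,
      hP.adjoint_eq]
    rfl
  · rintro ⟨n, hn, h⟩
    set S := T.pPow n with hSdef
    have hSsa : IsSelfAdjoint S := h
    have hSdense : Dense (S.domain : Set H) := hSsa.dense_domain
    have hST : S ≤ T := LinearPMap.pPow_le_self hsub n (by omega)
    have hTdense : Dense (T.domain : Set H) := hSdense.mono hST.1
    have hfa : T.IsFormalAdjoint T := hsymm
    have hTle : T ≤ T.adjoint := hfa.le_adjoint hTdense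
    have hadj : T.adjoint ≤ S.adjoint := LinearPMap.adjoint_antitone' hST hSdense hTdense
    have h1 : T.adjoint ≤ S := by rw [← h]; exact hadj
    have hTS : T = S := le_antisymm (hTle.trans h1) hST
    have h2 : T.adjoint ≤ T := h1.trans hST
    have hTsa : T.adjoint = T := le_antisymm h2 hTle
    -- D(T) ⊆ D(T ∘ T)
    have hdom2 : T.domain ≤ (T.pComp T).domain := by
      intro x hx
      have hxS : x ∈ (T.pPow n).domain := by
        rw [show T.pPow n = S from rfl, ← hTS]; exact hx
      have hx2 : x ∈ (T.pPow 2).domain := T.pPow_domain_le hn hxS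
      have : (T.pPow 2).domain = (T.pComp T).domain := by
        show (T.pComp (T.pPow 1)).domain = _
        rw [T.pPow_one]
      rwa [this] at hx2
    -- T is idempotent on its domain
    have hfix : ∀ (x : H) (hx : x ∈ T.domain), ∃ hTx : T ⟨x, hx⟩ ∈ T.domain,
        T ⟨T ⟨x, hx⟩, hTx⟩ = T ⟨x, hx⟩ := by
      intro x hx
      have hX : x ∈ (T.pComp T).domain := hdom2 hx
      obtain ⟨hx1, hx2⟩ := LinearPMap.mem_pComp_domain.mp hX
      refine ⟨hx2, ?_⟩
      have hs := hsub.2 (x := ⟨x, hX⟩) (y := ⟨x, hsub.1 hX⟩) rfl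
      rw [LinearPMap.pComp_apply' hX hx1 hx2] at hs
      exact hs
    -- T is a contraction
    have hbound : ∀ x : T.domain, ‖T x‖ ≤ ‖(x : H)‖ := by
      intro x
      obtain ⟨hTx, hfx⟩ := hfix x x.2
      have key : (inner ℂ (T x) (T x) : ℂ) = inner ℂ (x : H) (T x) := by
        have hh := hsymm x ⟨T x, hTx⟩
        rw [hfx] at hh
        exact hh
      have h1' : ‖T x‖ ^ 2 ≤ ‖(x : H)‖ * ‖T x‖ := by
        have e1 : (‖T x‖ : ℝ) ^ 2 = ‖(inner ℂ (T x) (T x) : ℂ)‖ := by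
          rw [inner_self_eq_norm_sq_to_K]
          simp [pow_two]
        rw [e1, key]
        exact norm_inner_le_norm _ _
      nlinarith [norm_nonneg (T x), norm_nonneg (x : H)]
    -- T is everywhere defined
    have hcont : Continuous T.toFun := by
      exact AddMonoidHomClass.continuous_of_bound T.toFun 1 (fun x => by simpa using hbound x)
    have hdomtop : T.domain = ⊤ := by
      rw [← hTsa]
      rw [Submodule.eq_top_iff']
      intro y
      rw [LinearPMap.mem_adjoint_domain_iff]
      exact ((innerSL ℂ y).comp ⟨T.toFun, hcont⟩).cont
    -- build the continuous linear map
    set L : H →ₗ[ℂ] H := T.toFun ∘ₗ ((LinearEquiv.ofTop T.domain hdomtop).symm :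
      H →ₗ[ℂ] T.domain) with hLdef
    have hLapp : ∀ (x : H) (hx : x ∈ T.domain), L x = T ⟨x, hx⟩ := by
      intro x hx
      show T.toFun ((LinearEquiv.ofTop T.domain hdomtop).symm x) = T.toFun ⟨x, hx⟩
      congr 1
    have hLb : ∀ x : H, ‖L x‖ ≤ 1 * ‖x‖ := by
      intro x
      have hx : x ∈ T.domain := hdomtop ▸ Submodule.mem_top
      rw [hLapp x hx, one_mul]
      exact hbound ⟨x, hx⟩
    set P : H →L[ℂ] H := L.mkContinuous 1 hLb with hPdef
    have hPapp : ∀ (x : H) (hx : x ∈ T.domain), P x = T ⟨x, hx⟩ := fun x hx => hLapp x hx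
    refine ⟨P, ?_, ?_, ?_⟩
    · apply LinearMap.IsSymmetric.isSelfAdjoint
      intro x y
      have hx : x ∈ T.domain := hdomtop ▸ Submodule.mem_top
      have hy : y ∈ T.domain := hdomtop ▸ Submodule.mem_top
      show (inner ℂ (P x) y : ℂ) = inner ℂ x (P y)
      rw [hPapp x hx, hPapp y hy]
      exact hsymm ⟨x, hx⟩ ⟨y, hy⟩
    · apply ContinuousLinearMap.ext
      intro x
      show P (P x) = P x
      have hx : x ∈ T.domain := hdomtop ▸ Submodule.mem_top
      obtain ⟨hTx, hfx⟩ := hfix x hx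
      rw [hPapp x hx, hPapp _ hTx]
      exact hfx
    · apply LinearPMap.ext
      · exact hdomtop
      · intro x hx hy
        show T ⟨x, hx⟩ = P x
        exact (hPapp x hx).symm
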